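/- Let C be a finitely complete small category with admissible class M. The operation (S, m) ↦ S·m = {h | m × h ∈ S}, where m × h = m ∘ m⁻¹(h) is the product of m and h in the slice over C, defines an action of the commutative monoid M(C) = M/C on the set Ω(C) of sieves on C: S·id_C = S and S·(m·n) = (S·m)·n for all m, n ∈ M/C. -/
import Mathlib


open CategoryTheory Opposite CategoryTheory.Limits

universe v u

variable {C : Type u} [Category.{v} C] [HasFiniteLimits C]

/-- An admissible class of monomorphisms on a finitely complete category `C`:
contains identities, closed under composition, and stable under pullback. -/
structure AdmissibleClass (C : Type u) [Category.{v} C] [HasFiniteLimits C] where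
  cls : ∀ ⦃Y X : C⦄, (Y ⟶ X) → Prop
  mono : ∀ ⦃Y X : C⦄ (f : Y ⟶ X), cls f → Mono f
  id_mem : ∀ X : C, cls (𝟙 X)
  comp_mem : ∀ ⦃Z Y X : C⦄ (g : Z ⟶ Y) (f : Y ⟶ X), cls g → cls f → cls (g ≫ f)
  pullback_stable : ∀ ⦃A B X : C⦄ (f : A ⟶ X) (m : B ⟶ X), cls m →
    cls (pullback.fst f m)

/-- The diagonal `f × g = f ∘ f⁻¹(g)` of the pullback of `f` and `g` over `X`,
i.e. the product of `f` and `g` in the slice over `X`. -/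
noncomputable def dprod {A B X : C} (f : A ⟶ X) (g : B ⟶ X) : pullback f g ⟶ X :=
  pullback.fst f g ≫ f

/-- The action of an arrow `m : A ⟶ X` on sieves: `S·m = { h | m × h ∈ S }`. -/
noncomputable def sieveAct {X A : C} (S : Sieve X) (m : A ⟶ X) : Sieve X where
  arrows := fun _Y h => S (pullback.fst m h ≫ m)
  downward_closed := by
    intro Y Z h hh g
    have hl : pullback.lift (pullback.fst m (g ≫ h)) (pullback.snd m (g ≫ h) ≫ g)
        (by rw [pullback.condition]; simp) ≫ pullback.fst m h
        = pullback.fst m (g ≫ h) := pullback.lift_fst _ _ _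
    show S (pullback.fst m (g ≫ h) ≫ m)
    rw [← hl, Category.assoc]
    exact S.downward_closed hh _

/-- `(S, m) ↦ S·m = sieveAct S m` defines an action of the commutative
monoid `M/X` on the set of sieves on `X`: `S·id = S` and `S·(m·n) = (S·m)·n`,
where `m·n = m ∘ m⁻¹(n)` is the product in the slice. -/
theorem sieveAct_is_action (M : AdmissibleClass C) (X : C) (S : Sieve X) :
    (sieveAct S (𝟙 X) = S) ∧
    (∀ ⦃A B : C⦄ (m : A ⟶ X) (n : B ⟶ X), M.cls m → M.cls n →
        sieveAct S (dprod m n) = sieveAct (sieveAct S m) n) := by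
  constructor
  · ext Y h
    show S (pullback.fst (𝟙 X) h ≫ 𝟙 X) ↔ S h
    constructor
    · intro hS
      have hl : pullback.lift h (𝟙 Y) (by simp) ≫ pullback.fst (𝟙 X) h = h :=
        pullback.lift_fst _ _ _
      have := S.downward_closed hS (pullback.lift h (𝟙 Y) (by simp))
      rwa [← Category.assoc, hl, Category.comp_id] at this
    · intro hS
      rw [pullback.condition]
      exact S.downward_closed hS _
  · intro A B m n _ _
    ext Y h
    show S (pullback.fst (dprod m n) h ≫ dprod m n) ↔
      S (pullback.fst m (pullback.fst n h ≫ n) ≫ m)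
    have c1 : pullback.fst (dprod m n) h ≫ dprod m n = pullback.snd (dprod m n) h ≫ h :=
      pullback.condition
    have c2 : pullback.fst m (pullback.fst n h ≫ n) ≫ m
        = pullback.snd m (pullback.fst n h ≫ n) ≫ (pullback.fst n h ≫ n) :=
      pullback.condition
    constructor
    · intro hS
      have e2 : pullback.fst m (pullback.fst n h ≫ n) ≫ m
          = (pullback.snd m (pullback.fst n h ≫ n) ≫ pullback.snd n h) ≫ h := calc
        _ = pullback.snd m (pullback.fst n h ≫ n) ≫ (pullback.fst n h ≫ n) := c2
        _ = pullback.snd m (pullback.fst n h ≫ n) ≫ (pullback.snd n h ≫ h) :=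
            whisker_eq _ pullback.condition
        _ = (pullback.snd m (pullback.fst n h ≫ n) ≫ pullback.snd n h) ≫ h :=
            (Category.assoc _ _ _).symm
      have cond1 : pullback.fst m (pullback.fst n h ≫ n) ≫ m
          = (pullback.snd m (pullback.fst n h ≫ n) ≫ pullback.fst n h) ≫ n :=
        c2.trans (Category.assoc _ _ _).symm
      have cond2 : pullback.lift (pullback.fst m (pullback.fst n h ≫ n))
            (pullback.snd m (pullback.fst n h ≫ n) ≫ pullback.fst n h) cond1 ≫ dprod m n
          = (pullback.snd m (pullback.fst n h ≫ n) ≫ pullback.snd n h) ≫ h := calc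
        _ = (pullback.lift (pullback.fst m (pullback.fst n h ≫ n))
              (pullback.snd m (pullback.fst n h ≫ n) ≫ pullback.fst n h) cond1
              ≫ pullback.fst m n) ≫ m := (Category.assoc _ _ _).symm
        _ = pullback.fst m (pullback.fst n h ≫ n) ≫ m :=
            eq_whisker (pullback.lift_fst _ _ _) m
        _ = _ := e2
      have key : pullback.lift _ _ cond2 ≫ pullback.fst (dprod m n) h ≫ dprod m n
          = pullback.fst m (pullback.fst n h ≫ n) ≫ m := calc
        _ = (pullback.lift _ _ cond2 ≫ pullback.fst (dprod m n) h) ≫ dprod m n :=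
            (Category.assoc _ _ _).symm
        _ = pullback.lift _ _ _ ≫ dprod m n := eq_whisker (pullback.lift_fst _ _ _) _
        _ = _ := cond2.trans e2.symm
      have := S.downward_closed hS (pullback.lift _ _ cond2)
      rwa [key] at this
    · intro hS
      have cond1 : (pullback.fst (dprod m n) h ≫ pullback.snd m n) ≫ n
          = pullback.snd (dprod m n) h ≫ h := calc
        _ = pullback.fst (dprod m n) h ≫ (pullback.snd m n ≫ n) := Category.assoc _ _ _
        _ = pullback.fst (dprod m n) h ≫ (pullback.fst m n ≫ m) :=
            whisker_eq _ pullback.condition.symm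
        _ = pullback.fst (dprod m n) h ≫ dprod m n := rfl
        _ = pullback.snd (dprod m n) h ≫ h := c1
      have cond2 : (pullback.fst (dprod m n) h ≫ pullback.fst m n) ≫ m
          = pullback.lift (pullback.fst (dprod m n) h ≫ pullback.snd m n)
              (pullback.snd (dprod m n) h) cond1 ≫ (pullback.fst n h ≫ n) := calc
        _ = pullback.fst (dprod m n) h ≫ (pullback.fst m n ≫ m) := Category.assoc _ _ _
        _ = pullback.fst (dprod m n) h ≫ (pullback.snd m n ≫ n) :=
            whisker_eq _ pullback.condition
        _ = (pullback.fst (dprod m n) h ≫ pullback.snd m n) ≫ n :=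
            (Category.assoc _ _ _).symm
        _ = (pullback.lift (pullback.fst (dprod m n) h ≫ pullback.snd m n)
              (pullback.snd (dprod m n) h) cond1 ≫ pullback.fst n h) ≫ n :=
            eq_whisker (pullback.lift_fst _ _ _).symm n
        _ = _ := Category.assoc _ _ _
      have key : pullback.lift _ _ cond2 ≫ pullback.fst m (pullback.fst n h ≫ n) ≫ m
          = pullback.fst (dprod m n) h ≫ dprod m n := calc
        _ = (pullback.lift _ _ cond2 ≫ pullback.fst m (pullback.fst n h ≫ n)) ≫ m :=
            (Category.assoc _ _ _).symm
        _ = (pullback.fst (dprod m n) h ≫ pullback.fst m n) ≫ m :=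
            eq_whisker (pullback.lift_fst _ _ _) m
        _ = pullback.fst (dprod m n) h ≫ (pullback.fst m n ≫ m) := Category.assoc _ _ _
        _ = pullback.fst (dprod m n) h ≫ dprod m n := rfl
      have := S.downward_closed hS (pullback.lift _ _ cond2)
      rwa [key] at this
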